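/- arXiv:0806.4093 — 3 statements merged into one kernel-verified Lean document; each statement's English description precedes it below -/
import Mathlib

section
/- Let (H, *, ≻, Δ) be an infinitesimal Hoch-bialgebra over a field K. If x and y are primitive elements of H (i.e. Δ(x) = 0 and Δ(y) = 0), then the element x ≻ y − x * y is primitive. -/
open scoped TensorProduct

/-- In an infinitesimal Hoch-bialgebra `(G, m, s, Δ)`, if `x` and
`y` are primitive then `x ≻ y − x * y` is primitive. -/
theorem stmt8 (K : Type*) [Field K] (G : Type*) [AddCommGroup G] [Module K G]
    (m s : G →ₗ[K] G →ₗ[K] G)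
    (hassoc : ∀ x y z : G, m (m x y) z = m x (m y z))
    (hcocycle : ∀ x y z : G,
      m (s x y) z + s (m x y) z = s x (m y z) + m x (s y z))
    (Δ : G →ₗ[K] G ⊗[K] G)
    (hcoassoc : ∀ x : G,
      (TensorProduct.assoc K G G G) (LinearMap.rTensor G Δ (Δ x))
        = LinearMap.lTensor G Δ (Δ x))
    (hΔs : ∀ x y : G, Δ (s x y)
        = LinearMap.lTensor G (s.flip y) (Δ x)
          + LinearMap.rTensor G (s x) (Δ y) + x ⊗ₜ[K] y)
    (hΔm : ∀ x y : G, Δ (m x y)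
        = LinearMap.lTensor G (m.flip y) (Δ x)
          + LinearMap.rTensor G (m x) (Δ y) + x ⊗ₜ[K] y)
    (x y : G) (hx : Δ x = 0) (hy : Δ y = 0) :
    Δ (s x y - m x y) = 0 := by
  simp [map_sub, hΔs, hΔm, hx, hy]
end

section
/- Let (H, *, ≻, Δ) be an infinitesimal Hoch-bialgebra over a field K. For every n ≥ 3, if x₁, …, xₙ are primitive elements of H (i.e. Δ(xᵢ) = 0 for all i), then the element [x₁, …, xₙ]ₙ := (x₁ * ⋯ * x_{n−1}) ≻ xₙ − x₁ * ((x₂ * ⋯ * x_{n−1}) ≻ xₙ) is primitive. -/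
open scoped TensorProduct

/-- In an infinitesimal Hoch-bialgebra `(G, m, s, Δ)`, for `n ≥ 3`
and primitive elements `x₁, …, xₙ` (here `x₁`, then `x₂ = a`, then the list `t`
giving `x₃, …, x_{n−1}`, then `xₙ`), the element
`[x₁,…,xₙ]ₙ = (x₁ * ⋯ * x_{n−1}) ≻ xₙ − x₁ * ((x₂ * ⋯ * x_{n−1}) ≻ xₙ)`
is primitive. -/
theorem stmt9 (K : Type*) [Field K] (G : Type*) [AddCommGroup G] [Module K G]
    (m s : G →ₗ[K] G →ₗ[K] G)
    (hassoc : ∀ x y z : G, m (m x y) z = m x (m y z))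
    (hcocycle : ∀ x y z : G,
      m (s x y) z + s (m x y) z = s x (m y z) + m x (s y z))
    (Δ : G →ₗ[K] G ⊗[K] G)
    (hcoassoc : ∀ x : G,
      (TensorProduct.assoc K G G G) (LinearMap.rTensor G Δ (Δ x))
        = LinearMap.lTensor G Δ (Δ x))
    (hΔs : ∀ x y : G, Δ (s x y)
        = LinearMap.lTensor G (s.flip y) (Δ x)
          + LinearMap.rTensor G (s x) (Δ y) + x ⊗ₜ[K] y)
    (hΔm : ∀ x y : G, Δ (m x y)
        = LinearMap.lTensor G (m.flip y) (Δ x)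
          + LinearMap.rTensor G (m x) (Δ y) + x ⊗ₜ[K] y)
    (x₁ a xₙ : G) (t : List G)
    (hx₁ : Δ x₁ = 0) (ha : Δ a = 0) (hxₙ : Δ xₙ = 0) (ht : ∀ u ∈ t, Δ u = 0) :
    Δ (s (List.foldl (fun u v => m u v) x₁ (a :: t)) xₙ
        - m x₁ (s (List.foldl (fun u v => m u v) a t) xₙ)) = 0 := by
  -- rewrite the foldl over (a :: t) as x₁ * (foldl over t starting at a)
  have hfold : ∀ (t : List G) (a x₁ : G),
      List.foldl (fun u v => m u v) (m x₁ a) t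
        = m x₁ (List.foldl (fun u v => m u v) a t) := by
    intro t
    induction t with
    | nil => intro a x₁; rfl
    | cons b t ih =>
      intro a x₁
      simp only [List.foldl_cons, hassoc, ih]
  have key : ∀ w : G, Δ (s (m x₁ w) xₙ - m x₁ (s w xₙ)) = 0 := by
    intro w
    have comm : ∀ z : G ⊗[K] G,
        LinearMap.lTensor G (s.flip xₙ) (LinearMap.rTensor G (m x₁) z)
          = LinearMap.rTensor G (m x₁) (LinearMap.lTensor G (s.flip xₙ) z) := by
      intro z
      rw [← LinearMap.comp_apply, LinearMap.lTensor_comp_rTensor,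
        ← LinearMap.rTensor_comp_lTensor, LinearMap.comp_apply]
    rw [map_sub, hΔs, hΔm, hΔm, hΔs, hx₁, hxₙ]
    simp only [map_zero, map_add, add_zero, zero_add,
      LinearMap.lTensor_tmul, LinearMap.rTensor_tmul, comm,
      LinearMap.flip_apply]
    abel
  simpa [List.foldl_cons, hfold t a x₁] using key (List.foldl (fun u v => m u v) a t)
end

section
/- Let (A, *, ≻) be a Hoch-algebra over a field K. On the unitalization A₊ := K ⊕ A, extend * and ≻ bilinearly by declaring 1 := (1, 0) a two-sided unit for both operations: (λ·1 + a) * (μ·1 + b) := λμ·1 + λb + μa + a * b and (λ·1 + a) ≻ (μ·1 + b) := λμ·1 + λb + μa + a ≻ b for λ, μ ∈ K and a, b ∈ A. Then A₊ is a unital Hoch-algebra: * is associative on A₊ with two-sided unit 1, one has x ≻ 1 = x = 1 ≻ x for all x ∈ A₊, and the Hochschild two-cocycle relation (x ≻ y) * z + (x * y) ≻ z = x ≻ (y * z) + x * (y ≻ z) holds for all x, y, z ∈ A₊. -/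
/-- The extension of a bilinear operation `f` on `A` to the unitalization
`A₊ = K × A`, making `1 = (1, 0)` a two-sided unit:
`(λ·1 + a) ∘ (μ·1 + b) = λμ·1 + λb + μa + a ∘ b`. -/
noncomputable def unitalExt {K A : Type*} [Field K] [AddCommGroup A] [Module K A]
    (f : A →ₗ[K] A →ₗ[K] A) : K × A → K × A → K × A :=
  fun p q => (p.1 * q.1, p.1 • q.2 + q.1 • p.2 + f p.2 q.2)

/-- If `(A, m, s)` is a Hoch-algebra over `K`, then the
unitalization `A₊ = K ⊕ A` with the extended operations is a unital
Hoch-algebra: the extended `*` is associative with two-sided unit `1 = (1,0)`,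
`1` is a two-sided unit for the extended `≻`, and the Hochschild two-cocycle
relation holds on all of `A₊`. -/
theorem stmt10 (K : Type*) [Field K] (A : Type*) [AddCommGroup A] [Module K A]
    (m s : A →ₗ[K] A →ₗ[K] A)
    (hassoc : ∀ x y z : A, m (m x y) z = m x (m y z))
    (hcocycle : ∀ x y z : A,
      m (s x y) z + s (m x y) z = s x (m y z) + m x (s y z)) :
    (∀ x y z : K × A,
      unitalExt m (unitalExt m x y) z = unitalExt m x (unitalExt m y z)) ∧
    (∀ x : K × A, unitalExt m x ((1 : K), (0 : A)) = x ∧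
      unitalExt m ((1 : K), (0 : A)) x = x) ∧
    (∀ x : K × A, unitalExt s x ((1 : K), (0 : A)) = x ∧
      unitalExt s ((1 : K), (0 : A)) x = x) ∧
    (∀ x y z : K × A,
      unitalExt m (unitalExt s x y) z + unitalExt s (unitalExt m x y) z
        = unitalExt s x (unitalExt m y z) + unitalExt m x (unitalExt s y z)) := by
  refine ⟨?_, ?_, ?_, ?_⟩
  · intro x y z
    simp only [unitalExt, Prod.mk.injEq, map_add, map_smul, LinearMap.add_apply,
      LinearMap.smul_apply, hassoc]
    constructor
    · ring
    · module
  · intro x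
    simp [unitalExt]
  · intro x
    simp [unitalExt]
  · intro x y z
    have h := hcocycle x.2 y.2 z.2
    simp only [unitalExt, Prod.mk.injEq, Prod.mk_add_mk, map_add, map_smul,
      LinearMap.add_apply, LinearMap.smul_apply, Prod.ext_iff, Prod.fst_add, Prod.snd_add]
    constructor
    · ring
    · linear_combination (norm := module) h
end
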